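/- Let ABCD be a convex quadrilateral and let E, F, G, H be the orthocenters of triangles BCD, CDA, DAB, ABC respectively. Then quadrilaterals ABCD and EFGH have equal area. -/

import Mathlib

/-- Shoelace area of a quadrilateral PQRS in the plane. -/
noncomputable def quadArea (P Q R S : EuclideanSpace ℝ (Fin 2)) : ℝ :=
  |P 0 * (Q 1 - S 1) + Q 0 * (R 1 - P 1) + R 0 * (S 1 - Q 1) + S 0 * (P 1 - R 1)| / 2

/-- `X` is the orthocenter of triangle `PQR`: it lies on all three altitudes. -/
def IsOrthocenter (X P Q R : EuclideanSpace ℝ (Fin 2)) : Prop :=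
  (inner ℝ (X - P) (Q - R) : ℝ) = 0 ∧ (inner ℝ (X - Q) (R - P) : ℝ) = 0 ∧
    (inner ℝ (X - R) (P - Q) : ℝ) = 0

lemma cross_ne_of_not_collinear {P Q R : EuclideanSpace ℝ (Fin 2)}
    (h : ¬ Collinear ℝ ({P, Q, R} : Set (EuclideanSpace ℝ (Fin 2)))) :
    (Q 0 - P 0) * (R 1 - P 1) - (Q 1 - P 1) * (R 0 - P 0) ≠ 0 := by
  intro hc
  apply h
  rw [collinear_iff_of_mem (Set.mem_insert P {Q, R})]
  have mk : ∀ (v X : EuclideanSpace ℝ (Fin 2)) (r : ℝ), X 0 = r * v 0 + P 0 →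
      X 1 = r * v 1 + P 1 → ∃ t : ℝ, X = t • v + P := by
    intro v X r e0 e1
    refine ⟨r, ?_⟩
    ext i
    fin_cases i
    · simpa using e0
    · simpa using e1
  by_cases hq : Q = P
  · have hsub : ∀ i : Fin 2, (R - P) i = R i - P i := fun i => rfl
    have hP : ∃ t : ℝ, P = t • (R - P) + P := mk _ _ 0 (by simp) (by simp)
    have hQ2 : ∃ t : ℝ, Q = t • (R - P) + P := mk _ _ 0 (by simp [hq]) (by simp [hq])
    have hR2 : ∃ t : ℝ, R = t • (R - P) + P := mk _ _ 1 (by simp [hsub]) (by simp [hsub])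
    exact ⟨R - P, fun p hp => by
      rcases hp with rfl | rfl | rfl <;> first | exact hP | exact hQ2 | exact hR2⟩
  · have hsub : ∀ i : Fin 2, (Q - P) i = Q i - P i := fun i => rfl
    have hP : ∃ t : ℝ, P = t • (Q - P) + P := mk _ _ 0 (by simp) (by simp)
    have hQ2 : ∃ t : ℝ, Q = t • (Q - P) + P := mk _ _ 1 (by simp [hsub]) (by simp [hsub])
    have hR2 : ∃ t : ℝ, R = t • (Q - P) + P := by
      by_cases h0 : Q 0 - P 0 = 0
      · have h1 : Q 1 - P 1 ≠ 0 := by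
          intro h1
          apply hq
          ext i
          fin_cases i
          · simpa [sub_eq_zero] using h0
          · simpa [sub_eq_zero] using h1
        have hR0 : R 0 = P 0 := by
          rw [h0] at hc
          simp only [zero_mul, zero_sub, neg_eq_zero, mul_eq_zero] at hc
          rcases hc with h' | h'
          · exact absurd h' h1
          · linarith [sub_eq_zero.mp h']
        refine mk _ _ ((R 1 - P 1) / (Q 1 - P 1)) ?_ ?_
        · rw [hsub 0, h0, hR0]; ring
        · rw [hsub 1]; field_simp; ring
      · refine mk _ _ ((R 0 - P 0) / (Q 0 - P 0)) ?_ ?_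
        · rw [hsub 0]; field_simp; ring
        · rw [hsub 1]; field_simp; linear_combination hc
    exact ⟨Q - P, fun p hp => by
      rcases hp with rfl | rfl | rfl <;> first | exact hP | exact hQ2 | exact hR2⟩

/-- Abstract algebraic core. -/
lemma alg_core (X s pu pv qu qv uv uu vv dE dF dG dH : ℝ)
    (h1 : pu * (dG * dE) = -(vv * dF * dH))
    (h2 : qv * (dH * dF) = -(uu * dE * dG))
    (h3 : pv = -uv) (h4 : qu = -uv)
    (h5 : X * s = pu * qv - pv * qu)
    (h6 : uu * vv = s ^ 2 + uv ^ 2)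
    (hdE : dE ≠ 0) (hdF : dF ≠ 0) (hdG : dG ≠ 0) (hdH : dH ≠ 0) (hs : s ≠ 0) :
    X = s := by
  have hne : (dG * dE) * (dH * dF) ≠ 0 :=
    mul_ne_zero (mul_ne_zero hdG hdE) (mul_ne_zero hdH hdF)
  have hmul : (pu * qv) * ((dG * dE) * (dH * dF)) = (uu * vv) * ((dG * dE) * (dH * dF)) := by
    calc (pu * qv) * ((dG * dE) * (dH * dF)) = (pu * (dG * dE)) * (qv * (dH * dF)) := by ring
    _ = (-(vv * dF * dH)) * (-(uu * dE * dG)) := by rw [h1, h2]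
    _ = (uu * vv) * ((dG * dE) * (dH * dF)) := by ring
  have hpq : pu * qv = uu * vv := mul_right_cancel₀ hne hmul
  have hXs : X * s = s * s := by rw [h5, h3, h4, hpq, h6]; ring
  exact mul_right_cancel₀ hs hXs

theorem orthocenter_central_quadrilateral_area
    (A B C D E F G H : EuclideanSpace ℝ (Fin 2))
    (hconv : ∃ P, P ∈ segment ℝ A C ∧ P ∈ segment ℝ B D)
    (h₁ : ¬ Collinear ℝ ({A, B, C} : Set (EuclideanSpace ℝ (Fin 2))))
    (h₂ : ¬ Collinear ℝ ({A, B, D} : Set (EuclideanSpace ℝ (Fin 2))))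
    (h₃ : ¬ Collinear ℝ ({A, C, D} : Set (EuclideanSpace ℝ (Fin 2))))
    (h₄ : ¬ Collinear ℝ ({B, C, D} : Set (EuclideanSpace ℝ (Fin 2))))
    (hE : IsOrthocenter E B C D)
    (hF : IsOrthocenter F C D A)
    (hG : IsOrthocenter G D A B)
    (hH : IsOrthocenter H A B C) :
    quadArea A B C D = quadArea E F G H := by
  have hsetF : ({C, D, A} : Set (EuclideanSpace ℝ (Fin 2))) = {A, C, D} := by
    ext x; simp only [Set.mem_insert_iff, Set.mem_singleton_iff]; tauto
  have hsetG : ({D, A, B} : Set (EuclideanSpace ℝ (Fin 2))) = {A, B, D} := by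
    ext x; simp only [Set.mem_insert_iff, Set.mem_singleton_iff]; tauto
  have hdE : (C 0 - B 0) * (D 1 - B 1) - (C 1 - B 1) * (D 0 - B 0) ≠ 0 :=
    cross_ne_of_not_collinear h₄
  have hdF : (D 0 - C 0) * (A 1 - C 1) - (D 1 - C 1) * (A 0 - C 0) ≠ 0 :=
    cross_ne_of_not_collinear (by rw [hsetF]; exact h₃)
  have hdG : (A 0 - D 0) * (B 1 - D 1) - (A 1 - D 1) * (B 0 - D 0) ≠ 0 :=
    cross_ne_of_not_collinear (by rw [hsetG]; exact h₂)
  have hdH : (B 0 - A 0) * (C 1 - A 1) - (B 1 - A 1) * (C 0 - A 0) ≠ 0 :=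
    cross_ne_of_not_collinear h₁
  -- s ≠ 0 : the diagonals of a convex quadrilateral are not parallel
  have hs : (C 0 - A 0) * (D 1 - B 1) - (C 1 - A 1) * (D 0 - B 0) ≠ 0 := by
    intro hs0
    obtain ⟨P, hPAC, hPBD⟩ := hconv
    obtain ⟨σ, τ, hσ, hτ, hστ, hP1⟩ := hPAC
    obtain ⟨σ', τ', hσ', hτ', hστ', hP2⟩ := hPBD
    have e0 : σ * A 0 + τ * C 0 = P 0 := by
      simpa using congrArg (· 0) hP1
    have e1 : σ * A 1 + τ * C 1 = P 1 := by
      simpa using congrArg (· 1) hP1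
    have f0 : σ' * B 0 + τ' * D 0 = P 0 := by
      simpa using congrArg (· 0) hP2
    have f1 : σ' * B 1 + τ' * D 1 = P 1 := by
      simpa using congrArg (· 1) hP2
    have hσe : σ = 1 - τ := by linarith
    have hσe' : σ' = 1 - τ' := by linarith
    rw [hσe] at e0 e1; rw [hσe'] at f0 f1
    have hb0 : B 0 - A 0 = τ * (C 0 - A 0) - τ' * (D 0 - B 0) := by
      linear_combination f0 - e0
    have hb1 : B 1 - A 1 = τ * (C 1 - A 1) - τ' * (D 1 - B 1) := by
      linear_combination f1 - e1
    exact cross_ne_of_not_collinear h₁ (by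
      linear_combination (C 1 - A 1) * hb0 - (C 0 - A 0) * hb1 + τ' * hs0)
  have hE1 : (E 0 - B 0) * (C 0 - D 0) + (E 1 - B 1) * (C 1 - D 1) = 0 := by
    simpa [PiLp.inner_apply, Fin.sum_univ_two, RCLike.inner_apply, mul_comm] using hE.1
  have hE2 : (E 0 - C 0) * (D 0 - B 0) + (E 1 - C 1) * (D 1 - B 1) = 0 := by
    simpa [PiLp.inner_apply, Fin.sum_univ_two, RCLike.inner_apply, mul_comm] using hE.2.1
  have hEc0 : E 0 * ((C 0 - B 0) * (D 1 - B 1) - (C 1 - B 1) * (D 0 - B 0)) = ((B 0 * (C 0 - D 0) + B 1 * (C 1 - D 1)) * (D 1 - B 1) - (C 0 * (D 0 - B 0) + C 1 * (D 1 - B 1)) * (C 1 - D 1)) := by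
    linear_combination (D 1 - B 1) * hE1 - (C 1 - D 1) * hE2
  have hEc1 : E 1 * ((C 0 - B 0) * (D 1 - B 1) - (C 1 - B 1) * (D 0 - B 0)) = ((C 0 - D 0) * (C 0 * (D 0 - B 0) + C 1 * (D 1 - B 1)) - (D 0 - B 0) * (B 0 * (C 0 - D 0) + B 1 * (C 1 - D 1))) := by
    linear_combination (C 0 - D 0) * hE2 - (D 0 - B 0) * hE1
  have hF1 : (F 0 - C 0) * (D 0 - A 0) + (F 1 - C 1) * (D 1 - A 1) = 0 := by
    simpa [PiLp.inner_apply, Fin.sum_univ_two, RCLike.inner_apply, mul_comm] using hF.1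
  have hF2 : (F 0 - D 0) * (A 0 - C 0) + (F 1 - D 1) * (A 1 - C 1) = 0 := by
    simpa [PiLp.inner_apply, Fin.sum_univ_two, RCLike.inner_apply, mul_comm] using hF.2.1
  have hFc0 : F 0 * ((D 0 - C 0) * (A 1 - C 1) - (D 1 - C 1) * (A 0 - C 0)) = ((C 0 * (D 0 - A 0) + C 1 * (D 1 - A 1)) * (A 1 - C 1) - (D 0 * (A 0 - C 0) + D 1 * (A 1 - C 1)) * (D 1 - A 1)) := by
    linear_combination (A 1 - C 1) * hF1 - (D 1 - A 1) * hF2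
  have hFc1 : F 1 * ((D 0 - C 0) * (A 1 - C 1) - (D 1 - C 1) * (A 0 - C 0)) = ((D 0 - A 0) * (D 0 * (A 0 - C 0) + D 1 * (A 1 - C 1)) - (A 0 - C 0) * (C 0 * (D 0 - A 0) + C 1 * (D 1 - A 1))) := by
    linear_combination (D 0 - A 0) * hF2 - (A 0 - C 0) * hF1
  have hG1 : (G 0 - D 0) * (A 0 - B 0) + (G 1 - D 1) * (A 1 - B 1) = 0 := by
    simpa [PiLp.inner_apply, Fin.sum_univ_two, RCLike.inner_apply, mul_comm] using hG.1
  have hG2 : (G 0 - A 0) * (B 0 - D 0) + (G 1 - A 1) * (B 1 - D 1) = 0 := by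
    simpa [PiLp.inner_apply, Fin.sum_univ_two, RCLike.inner_apply, mul_comm] using hG.2.1
  have hGc0 : G 0 * ((A 0 - D 0) * (B 1 - D 1) - (A 1 - D 1) * (B 0 - D 0)) = ((D 0 * (A 0 - B 0) + D 1 * (A 1 - B 1)) * (B 1 - D 1) - (A 0 * (B 0 - D 0) + A 1 * (B 1 - D 1)) * (A 1 - B 1)) := by
    linear_combination (B 1 - D 1) * hG1 - (A 1 - B 1) * hG2
  have hGc1 : G 1 * ((A 0 - D 0) * (B 1 - D 1) - (A 1 - D 1) * (B 0 - D 0)) = ((A 0 - B 0) * (A 0 * (B 0 - D 0) + A 1 * (B 1 - D 1)) - (B 0 - D 0) * (D 0 * (A 0 - B 0) + D 1 * (A 1 - B 1))) := by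
    linear_combination (A 0 - B 0) * hG2 - (B 0 - D 0) * hG1
  have hH1 : (H 0 - A 0) * (B 0 - C 0) + (H 1 - A 1) * (B 1 - C 1) = 0 := by
    simpa [PiLp.inner_apply, Fin.sum_univ_two, RCLike.inner_apply, mul_comm] using hH.1
  have hH2 : (H 0 - B 0) * (C 0 - A 0) + (H 1 - B 1) * (C 1 - A 1) = 0 := by
    simpa [PiLp.inner_apply, Fin.sum_univ_two, RCLike.inner_apply, mul_comm] using hH.2.1
  have hHc0 : H 0 * ((B 0 - A 0) * (C 1 - A 1) - (B 1 - A 1) * (C 0 - A 0)) = ((A 0 * (B 0 - C 0) + A 1 * (B 1 - C 1)) * (C 1 - A 1) - (B 0 * (C 0 - A 0) + B 1 * (C 1 - A 1)) * (B 1 - C 1)) := by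
    linear_combination (C 1 - A 1) * hH1 - (B 1 - C 1) * hH2
  have hHc1 : H 1 * ((B 0 - A 0) * (C 1 - A 1) - (B 1 - A 1) * (C 0 - A 0)) = ((B 0 - C 0) * (B 0 * (C 0 - A 0) + B 1 * (C 1 - A 1)) - (C 0 - A 0) * (A 0 * (B 0 - C 0) + A 1 * (B 1 - C 1))) := by
    linear_combination (B 0 - C 0) * hH2 - (C 0 - A 0) * hH1
  -- the two pair relations (one component each of G-E and H-F)
  have hpv : (G 0 - E 0) * (D 0 - B 0) + (G 1 - E 1) * (D 1 - B 1)
      = -((C 0 - A 0) * (D 0 - B 0) + (C 1 - A 1) * (D 1 - B 1)) := by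
    linear_combination -hG2 - hE2
  have hqu : (H 0 - F 0) * (C 0 - A 0) + (H 1 - F 1) * (C 1 - A 1)
      = -((C 0 - A 0) * (D 0 - B 0) + (C 1 - A 1) * (D 1 - B 1)) := by
    linear_combination hH2 + hF2
  -- the factorizations of the other components
  have hpu : ((G 0 - E 0) * (C 0 - A 0) + (G 1 - E 1) * (C 1 - A 1)) *
      (((A 0 - D 0) * (B 1 - D 1) - (A 1 - D 1) * (B 0 - D 0)) *
       ((C 0 - B 0) * (D 1 - B 1) - (C 1 - B 1) * (D 0 - B 0)))
      = -(((D 0 - B 0) ^ 2 + (D 1 - B 1) ^ 2) *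
          ((D 0 - C 0) * (A 1 - C 1) - (D 1 - C 1) * (A 0 - C 0)) *
          ((B 0 - A 0) * (C 1 - A 1) - (B 1 - A 1) * (C 0 - A 0))) := by
    linear_combination
      ((C 0 - A 0) * ((C 0 - B 0) * (D 1 - B 1) - (C 1 - B 1) * (D 0 - B 0))) * hGc0 +
      ((C 1 - A 1) * ((C 0 - B 0) * (D 1 - B 1) - (C 1 - B 1) * (D 0 - B 0))) * hGc1 -
      ((C 0 - A 0) * ((A 0 - D 0) * (B 1 - D 1) - (A 1 - D 1) * (B 0 - D 0))) * hEc0 -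
      ((C 1 - A 1) * ((A 0 - D 0) * (B 1 - D 1) - (A 1 - D 1) * (B 0 - D 0))) * hEc1
  have hqv : ((H 0 - F 0) * (D 0 - B 0) + (H 1 - F 1) * (D 1 - B 1)) *
      (((B 0 - A 0) * (C 1 - A 1) - (B 1 - A 1) * (C 0 - A 0)) *
       ((D 0 - C 0) * (A 1 - C 1) - (D 1 - C 1) * (A 0 - C 0)))
      = -(((C 0 - A 0) ^ 2 + (C 1 - A 1) ^ 2) *
          ((C 0 - B 0) * (D 1 - B 1) - (C 1 - B 1) * (D 0 - B 0)) *
          ((A 0 - D 0) * (B 1 - D 1) - (A 1 - D 1) * (B 0 - D 0))) := by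
    linear_combination
      ((D 0 - B 0) * ((D 0 - C 0) * (A 1 - C 1) - (D 1 - C 1) * (A 0 - C 0))) * hHc0 +
      ((D 1 - B 1) * ((D 0 - C 0) * (A 1 - C 1) - (D 1 - C 1) * (A 0 - C 0))) * hHc1 -
      ((D 0 - B 0) * ((B 0 - A 0) * (C 1 - A 1) - (B 1 - A 1) * (C 0 - A 0))) * hFc0 -
      ((D 1 - B 1) * ((B 0 - A 0) * (C 1 - A 1) - (B 1 - A 1) * (C 0 - A 0))) * hFc1
  have hXs := alg_core
    ((G 0 - E 0) * (H 1 - F 1) - (G 1 - E 1) * (H 0 - F 0))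
    ((C 0 - A 0) * (D 1 - B 1) - (C 1 - A 1) * (D 0 - B 0))
    ((G 0 - E 0) * (C 0 - A 0) + (G 1 - E 1) * (C 1 - A 1))
    ((G 0 - E 0) * (D 0 - B 0) + (G 1 - E 1) * (D 1 - B 1))
    ((H 0 - F 0) * (C 0 - A 0) + (H 1 - F 1) * (C 1 - A 1))
    ((H 0 - F 0) * (D 0 - B 0) + (H 1 - F 1) * (D 1 - B 1))
    ((C 0 - A 0) * (D 0 - B 0) + (C 1 - A 1) * (D 1 - B 1))
    ((C 0 - A 0) ^ 2 + (C 1 - A 1) ^ 2)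
    ((D 0 - B 0) ^ 2 + (D 1 - B 1) ^ 2)
    ((C 0 - B 0) * (D 1 - B 1) - (C 1 - B 1) * (D 0 - B 0))
    ((D 0 - C 0) * (A 1 - C 1) - (D 1 - C 1) * (A 0 - C 0))
    ((A 0 - D 0) * (B 1 - D 1) - (A 1 - D 1) * (B 0 - D 0))
    ((B 0 - A 0) * (C 1 - A 1) - (B 1 - A 1) * (C 0 - A 0))
    hpu hqv hpv hqu (by ring) (by ring) hdE hdF hdG hdH hs
  have key : E 0 * (F 1 - H 1) + F 0 * (G 1 - E 1) + G 0 * (H 1 - F 1) + H 0 * (E 1 - G 1)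
      = A 0 * (B 1 - D 1) + B 0 * (C 1 - A 1) + C 0 * (D 1 - B 1) + D 0 * (A 1 - C 1) := by
    linear_combination hXs
  unfold quadArea
  rw [key]
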